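/- Let N be a binoid and (S,p) an N-set which is finitely generated. Then S admits a finite partition into irreducible N-subsets, and the number of irreducible components is at most the number of generators of S. -/

import Mathlib

/-!  Basic theory of (commutative) binoids: a commutative monoid together with
an absorbing element `infty`.  We use a bundled structure `BinoidOn X`. -/

structure BinoidOn (X : Type u) where
  add : X → X → X
  zero : X
  infty : X
  add_assoc : ∀ a b c : X, add (add a b) c = add a (add b c)
  add_comm : ∀ a b : X, add a b = add b a
  zero_add : ∀ a : X, add zero a = a
  infty_add : ∀ a : X, add infty a = infty

namespace BinoidOn

variable {X : Type u} {Y : Type v} (B : BinoidOn X) (C : BinoidOn Y)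

/-- `n`-fold multiple `n • a`. -/
def smul (B : BinoidOn X) : ℕ → X → X
  | 0, _ => B.zero
  | n + 1, a => B.add a (smul B n a)

/-- Sum of a list of elements. -/
def listSum (l : List X) : X := l.foldr B.add B.zero

/-- An ideal of a binoid: a nonempty subset `I` with `I + N ⊆ I`. -/
def IsIdeal (I : Set X) : Prop := I.Nonempty ∧ ∀ a ∈ I, ∀ x : X, B.add a x ∈ I

/-- A subbinoid: a submonoid containing `infty`. -/
def IsSubbinoid (M : Set X) : Prop :=
  B.zero ∈ M ∧ B.infty ∈ M ∧ ∀ a ∈ M, ∀ b ∈ M, B.add a b ∈ M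

/-- The set of units. -/
def unitsSet : Set X := {u | ∃ a, B.add u a = B.zero}

/-- `N₊`, the ideal of non-units. -/
def nplus : Set X := (B.unitsSet)ᶜ

/-- The ideal generated by a set. -/
def genIdeal (S : Set X) : Set X := {x | ∃ a ∈ S, ∃ n, x = B.add a n}

/-- The `n`-fold sum `nI = {a₁ + ⋯ + aₙ | aᵢ ∈ I}`. -/
def nSum (n : ℕ) (I : Set X) : Set X :=
  {x | ∃ l : List X, l.length = n ∧ (∀ a ∈ l, a ∈ I) ∧ x = B.listSum l}

/-- The Frobenius power `[q]I`: the ideal generated by `{q • a | a ∈ I}`. -/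
def frob (q : ℕ) (I : Set X) : Set X := B.genIdeal {x | ∃ a ∈ I, x = B.smul q a}

/-- The radical of an ideal. -/
def radical (I : Set X) : Set X := {a | ∃ n : ℕ, 0 < n ∧ B.smul n a ∈ I}

/-- `N₊`-primary ideal. -/
def IsPrimary (I : Set X) : Prop := B.radical I = B.nplus

/-- Finitely generated binoid. -/
def FG : Prop :=
  ∃ G : Finset X, ∀ x : X, x = B.infty ∨ ∃ l : List X, (∀ a ∈ l, a ∈ G) ∧ x = B.listSum l

/-- Semipositive: a nonzero binoid with finitely many units. -/
def Semipositive : Prop := B.zero ≠ B.infty ∧ B.unitsSet.Finite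

/-- Prime ideal. -/
def IsPrime (P : Set X) : Prop :=
  B.IsIdeal P ∧ P ≠ Set.univ ∧ ∀ a b : X, B.add a b ∈ P → a ∈ P ∨ b ∈ P

/-- The (combinatorial) dimension of the binoid is `d`: there is a strictly
increasing chain of prime ideals of length `d`, and no longer one. -/
def HasDim (d : ℕ) : Prop :=
  (∃ c : Fin (d + 1) → Set X, StrictMono c ∧ ∀ i, B.IsPrime (c i)) ∧
    ∀ (k : ℕ) (c : Fin (k + 1) → Set X), StrictMono c → (∀ i, B.IsPrime (c i)) → k ≤ d

end BinoidOn

/-- The setoid collapsing a subset `A` to a single point (Rees congruence). -/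
def collapseSetoid {X : Type u} (A : Set X) : Setoid X where
  r x y := x = y ∨ (x ∈ A ∧ y ∈ A)
  iseqv := ⟨fun _ => Or.inl rfl,
    fun h => h.elim (fun e => Or.inl e.symm) (fun h => Or.inr ⟨h.2, h.1⟩),
    fun h1 h2 => by
      rcases h1 with rfl | h1
      · exact h2
      · rcases h2 with rfl | h2
        · exact Or.inr h1
        · exact Or.inr ⟨h1.1, h2.2⟩⟩

namespace BinoidOn

variable {X : Type u} {Y : Type v} (B : BinoidOn X) (C : BinoidOn Y)

/-- The underlying set of the Rees quotient `N/I` (we collapse the ideal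
generated by `I`; for an ideal `I` this is `I` itself). -/
abbrev ReesQuot (I : Set X) : Type u := Quotient (collapseSetoid (B.genIdeal I))

lemma genIdeal_closed {I : Set X} {a : X} (ha : a ∈ B.genIdeal I) (x : X) :
    B.add a x ∈ B.genIdeal I := by
  obtain ⟨b, hb, n, rfl⟩ := ha
  exact ⟨b, hb, B.add n x, (B.add_assoc b n x)⟩

/-- The Rees quotient binoid `N/I`. -/
def quotB (I : Set X) : BinoidOn (B.ReesQuot I) where
  add := Quotient.map₂ B.add (by
    rintro a a' (rfl | ⟨ha, ha'⟩) b b' (rfl | ⟨hb, hb'⟩)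
    · exact Or.inl rfl
    · exact Or.inr ⟨by rw [B.add_comm]; exact B.genIdeal_closed hb _,
        by rw [B.add_comm]; exact B.genIdeal_closed hb' _⟩
    · exact Or.inr ⟨B.genIdeal_closed ha _, B.genIdeal_closed ha' _⟩
    · exact Or.inr ⟨B.genIdeal_closed ha _, B.genIdeal_closed ha' _⟩)
  zero := Quotient.mk _ B.zero
  infty := Quotient.mk _ B.infty
  add_assoc := by
    rintro ⟨a⟩ ⟨b⟩ ⟨c⟩
    exact congrArg (Quotient.mk _) (B.add_assoc a b c)
  add_comm := by
    rintro ⟨a⟩ ⟨b⟩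
    exact congrArg (Quotient.mk _) (B.add_comm a b)
  zero_add := by
    rintro ⟨a⟩
    exact congrArg (Quotient.mk _) (B.zero_add a)
  infty_add := by
    rintro ⟨a⟩
    exact congrArg (Quotient.mk _) (B.infty_add a)

/-- The underlying set of `N/[q]N₊`. -/
abbrev hkQuot (q : ℕ) : Type u := Quotient (collapseSetoid (B.frob q B.nplus))

/-- The Hilbert–Kunz function `HKF(N,q) = #(N/[q]N₊)`, where `#S = |S| - 1`. -/
noncomputable def hkf (q : ℕ) : ℕ := Nat.card (B.hkQuot q) - 1

/-- Pairs with an `infty` coordinate. -/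
def inftyPairs : Set (X × Y) := {p | p.1 = B.infty ∨ p.2 = C.infty}

/-- Carrier of the smash product `M ∧ N`. -/
abbrev SmashCarrier : Type _ := Quotient (collapseSetoid (B.inftyPairs C))

lemma inftyPairs_add_left {p q : X × Y} (hp : p ∈ B.inftyPairs C) :
    (B.add p.1 q.1, C.add p.2 q.2) ∈ B.inftyPairs C := by
  rcases hp with h | h
  · exact Or.inl (by rw [h, B.infty_add])
  · exact Or.inr (by rw [h, C.infty_add])

lemma inftyPairs_add_right {p q : X × Y} (hq : q ∈ B.inftyPairs C) :
    (B.add p.1 q.1, C.add p.2 q.2) ∈ B.inftyPairs C := by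
  rcases hq with h | h
  · exact Or.inl (by rw [h, B.add_comm, B.infty_add])
  · exact Or.inr (by rw [h, C.add_comm, C.infty_add])

/-- The smash product binoid `M ∧ N`. -/
def smash : BinoidOn (B.SmashCarrier C) where
  add := Quotient.map₂ (fun p q => (B.add p.1 q.1, C.add p.2 q.2)) (by
    rintro p p' (rfl | ⟨hp, hp'⟩) q q' (rfl | ⟨hq, hq'⟩)
    · exact Or.inl rfl
    · exact Or.inr ⟨B.inftyPairs_add_right C hq, B.inftyPairs_add_right C hq'⟩
    · exact Or.inr ⟨B.inftyPairs_add_left C hp, B.inftyPairs_add_left C hp'⟩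
    · exact Or.inr ⟨B.inftyPairs_add_left C hp, B.inftyPairs_add_left C hp'⟩)
  zero := Quotient.mk _ (B.zero, C.zero)
  infty := Quotient.mk _ (B.infty, C.infty)
  add_assoc := by
    rintro ⟨a⟩ ⟨b⟩ ⟨c⟩
    exact congrArg (Quotient.mk _)
      (Prod.ext (B.add_assoc _ _ _) (C.add_assoc _ _ _))
  add_comm := by
    rintro ⟨a⟩ ⟨b⟩
    exact congrArg (Quotient.mk _)
      (Prod.ext (B.add_comm _ _) (C.add_comm _ _))
  zero_add := by
    rintro ⟨a⟩
    exact congrArg (Quotient.mk _)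
      (Prod.ext (B.zero_add _) (C.zero_add _))
  infty_add := by
    rintro ⟨a⟩
    exact congrArg (Quotient.mk _)
      (Prod.ext (B.infty_add _) (C.infty_add _))

end BinoidOn

/-- An `N`-set: a pointed set with an operation of the binoid. -/
structure NSetOn {X : Type u} (B : BinoidOn X) (S : Type w) where
  pt : S
  act : X → S → S
  act_zero : ∀ s, act B.zero s = s
  act_infty : ∀ s, act B.infty s = pt
  act_pt : ∀ n, act n pt = pt
  act_add : ∀ n m s, act (B.add n m) s = act n (act m s)

section NSet

variable {X : Type u} {S : Type w} {B : BinoidOn X}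

/-- One step of the connectedness relation on `S ∖ {p}`. -/
def NStep (σ : NSetOn B S) (s t : S) : Prop :=
  s ≠ σ.pt ∧ t ≠ σ.pt ∧ ∃ n, n ≠ B.infty ∧ (σ.act n s = t ∨ σ.act n t = s)

/-- The connectedness (equivalence) relation `∼_N` on `S ∖ {p}`. -/
def NConn (σ : NSetOn B S) : S → S → Prop := Relation.ReflTransGen (NStep σ)

/-- `N`-subsets of an `N`-set. -/
def IsNSubset (σ : NSetOn B S) (T : Set S) : Prop :=
  σ.pt ∈ T ∧ ∀ n : X, ∀ s ∈ T, σ.act n s ∈ T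

/-- `T` is a pointed union of two nontrivial `N`-subsets. -/
def IsReducibleSet (σ : NSetOn B S) (T : Set S) : Prop :=
  ∃ A A' : Set S, IsNSubset σ A ∧ IsNSubset σ A' ∧
    A ≠ {σ.pt} ∧ A' ≠ {σ.pt} ∧ A ∪ A' = T ∧ A ∩ A' = {σ.pt}

/-- An irreducible `N`-subset. -/
def IsIrreducibleSet (σ : NSetOn B S) (T : Set S) : Prop :=
  IsNSubset σ T ∧ T ≠ {σ.pt} ∧ ¬ IsReducibleSet σ T

end NSet

/-- The trivial binoid `{0, ∞}`, realized on `Bool` (`false = 0`, `true = ∞`). -/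
def trivB : BinoidOn Bool where
  add := or
  zero := false
  infty := true
  add_assoc := by decide
  add_comm := by decide
  zero_add := by decide
  infty_add := by decide

/-- The binoid `M^∞` obtained from a commutative monoid by adjoining `∞ = ⊤`. -/
def withTopBinoid (M : Type u) [AddCommMonoid M] : BinoidOn (WithTop M) where
  add := (· + ·)
  zero := 0
  infty := ⊤
  add_assoc := add_assoc
  add_comm := add_comm
  zero_add := zero_add
  infty_add := fun a => WithTop.top_add a



section Aux

variable {X S : Type} {B : BinoidOn X} (sigma : NSetOn B S)

lemma nstep_symm {s t : S} (h : NStep sigma s t) : NStep sigma t s := by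
  obtain ⟨hs, ht, n, hn, h⟩ := h
  exact ⟨ht, hs, n, hn, h.symm⟩

lemma nconn_symm {s t : S} (h : NConn sigma s t) : NConn sigma t s :=
  (@Relation.ReflTransGen.stdSymm _ _ ⟨fun _ _ h => nstep_symm sigma h⟩).symm _ _ h

lemma nconn_pt : ∀ {s t : S}, NConn sigma s t → t = sigma.pt → s = sigma.pt := by
  intro s t h
  induction h with
  | refl => exact id
  | tail _ h2 _ => intro ht; exact absurd ht h2.2.1

/-- The connectedness setoid. -/
def nconnSetoid : Setoid S :=
  ⟨NConn sigma, ⟨fun _ => Relation.ReflTransGen.refl,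
    fun h => nconn_symm sigma h, fun h1 h2 => h1.trans h2⟩⟩

end Aux

/-- A finitely generated `N`-set `S` has a finite partition into
irreducible `N`-subsets, with at most as many components as generators. -/
theorem stmt5 {X S : Type} (B : BinoidOn X) (sigma : NSetOn B S)
    (gens : Finset S) (hgen : ∀ s : S, ∃ n : X, ∃ g ∈ gens, s = sigma.act n g) :
    ∃ (k : ℕ) (T : Fin k → Set S), k ≤ gens.card ∧
      (∀ i, IsIrreducibleSet sigma (T i)) ∧
      ((⋃ i, T i) ∪ {sigma.pt} = Set.univ) ∧
      (∀ i j, i ≠ j → T i ∩ T j = {sigma.pt}) := by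
  classical
  set st := nconnSetoid sigma with hst
  set f : S → Quotient st := Quotient.mk st with hf
  have hfpt : ∀ s : S, f s = f sigma.pt → s = sigma.pt := fun s h =>
    nconn_pt sigma (Quotient.exact h) rfl
  set R : Finset (Quotient st) := (gens.image f).erase (f sigma.pt) with hR
  set e := R.equivFin with he
  refine ⟨R.card, fun i => {s | s = sigma.pt ∨ f s = (e.symm i : Quotient st)},
    ?_, ?_, ?_, ?_⟩
  · calc R.card ≤ (gens.image f).card := Finset.card_le_card (Finset.erase_subset _ _)
      _ ≤ gens.card := Finset.card_image_le
  · intro i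
    set q : Quotient st := (e.symm i : Quotient st) with hq
    have hqR : q ∈ R := (e.symm i).2
    have hqne : q ≠ f sigma.pt := (Finset.mem_erase.mp hqR).1
    obtain ⟨g, hg, hgq⟩ := Finset.mem_image.mp (Finset.mem_erase.mp hqR).2
    refine ⟨⟨Or.inl rfl, ?_⟩, ?_, ?_⟩
    · -- N-subset
      rintro n s (rfl | hs)
      · exact Or.inl (sigma.act_pt n)
      · by_cases hpt : sigma.act n s = sigma.pt
        · exact Or.inl hpt
        · have hspt : s ≠ sigma.pt := fun h => hqne (h ▸ hs).symm
          have hn : n ≠ B.infty := fun h => hpt (h ▸ sigma.act_infty s)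
          have : NConn sigma (sigma.act n s) s :=
            Relation.ReflTransGen.single ⟨hpt, hspt, n, hn, Or.inr rfl⟩
          exact Or.inr ((Quotient.sound this).trans hs)
    · -- ≠ {pt}
      intro hT
      have hgpt : g ≠ sigma.pt := fun h => hqne (hgq.symm.trans (congrArg f h))
      have : g ∈ ({sigma.pt} : Set S) := hT ▸ (Or.inr hgq)
      exact hgpt this
    · -- not reducible
      rintro ⟨A, A', hA, hA', hAne, hA'ne, hun, hint⟩
      -- chain lemma
      have key : ∀ a b : S, NConn sigma a b → a ∈ A → f a = q → b ∈ A := by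
        intro a b h
        induction h with
        | refl => exact fun h _ => h
        | @tail c b h1 h2 ih =>
          intro ha hq'
          have hc : c ∈ A := ih ha hq'
          have hfc : f c = q := (Quotient.sound (nconn_symm sigma h1)).trans hq'
          obtain ⟨hcpt, hbpt, n, hn, hcase⟩ := id h2
          rcases hcase with hcb | hbc
          · exact hcb ▸ hA.2 n c hc
          · have hfb : f b = q :=
              (Quotient.sound (Relation.ReflTransGen.single (nstep_symm sigma h2))).trans hfc
            have hbT : b ∈ A ∪ A' := hun ▸ (Or.inr hfb)
            rcases hbT with hb | hb
            · exact hb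
            · have : c ∈ A ∩ A' := ⟨hc, hbc ▸ hA'.2 n b hb⟩
              rw [hint] at this
              exact absurd this hcpt
      have hsub : ({sigma.pt} : Set S) ⊆ A := Set.singleton_subset_iff.mpr hA.1
      have hsub' : ({sigma.pt} : Set S) ⊆ A' := Set.singleton_subset_iff.mpr hA'.1
      obtain ⟨a, ha, hapt⟩ := Set.exists_of_ssubset (hsub.ssubset_of_ne (Ne.symm hAne))
      obtain ⟨a', ha', ha'pt⟩ := Set.exists_of_ssubset (hsub'.ssubset_of_ne (Ne.symm hA'ne))
      have haT : a ∈ A ∪ A' := Or.inl ha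
      have ha'T : a' ∈ A ∪ A' := Or.inr ha'
      rw [hun] at haT ha'T
      have hfa : f a = q := haT.resolve_left hapt
      have hfa' : f a' = q := ha'T.resolve_left ha'pt
      have hconn : NConn sigma a a' := Quotient.exact (hfa.trans hfa'.symm)
      have : a' ∈ A ∩ A' := ⟨key a a' hconn ha hfa, ha'⟩
      rw [hint] at this
      exact ha'pt this
  · -- union covers
    apply Set.eq_univ_of_forall
    intro s
    by_cases hspt : s = sigma.pt
    · exact Or.inr hspt
    · obtain ⟨n, g, hg, hs⟩ := hgen s
      have hn : n ≠ B.infty := fun h => hspt (by rw [hs, h, sigma.act_infty])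
      have hgpt : g ≠ sigma.pt := fun h => hspt (by rw [hs, h, sigma.act_pt])
      have hstep : NConn sigma s g :=
        Relation.ReflTransGen.single ⟨hspt, hgpt, n, hn, Or.inr hs.symm⟩
      have hfg : f s = f g := Quotient.sound hstep
      have hfgpt : f g ≠ f sigma.pt := fun h => hgpt (hfpt g h)
      have hgR : f g ∈ R := Finset.mem_erase.mpr ⟨hfgpt, Finset.mem_image_of_mem f hg⟩
      refine Or.inl (Set.mem_iUnion.mpr ⟨e ⟨f g, hgR⟩, Or.inr ?_⟩)
      rw [hfg, Equiv.symm_apply_apply]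
  · -- disjointness
    intro i j hij
    ext s
    constructor
    · rintro ⟨(rfl | hi), (h | hj)⟩
      · exact rfl
      · exact rfl
      · exact h
      · exfalso
        apply hij
        have : e.symm i = e.symm j := Subtype.ext (hi ▸ hj ▸ rfl)
        exact e.symm.injective this
    · rintro rfl
      exact ⟨Or.inl rfl, Or.inl rfl⟩
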